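/- Let M = (S, A, P, R) be a task (an MDP with deterministic dynamics) with optimal Q-value function Q* and optimal world Q-value function Q̄*. Then for all states s ∈ S and actions a ∈ A, the optimal task Q-value is recovered by maximising the world value function over goals: Q*(s, a) = max_{g ∈ G} Q̄*(s, g, a). (Theorem 1(ii)) -/

import Mathlib

/-!
Formalisation of "World Value Functions" (WVFs).

We model a *task* as a Markov decision process with **deterministic** dynamics:
a transition function `δ : S → A → S`, a set of absorbing states
(`absorbing : S → Prop`; a transition *into* an absorbing state is a terminal
transition), and a reward function `R s a` giving the reward `R(s, a, s')` of
the deterministic transition `s' = δ s a`.  After a terminal transition the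
episode is over: absorbing states are frozen and yield reward `0`.

Values are undiscounted sums of rewards, taken in the extended reals `EReal`
(the return of a policy is the `liminf` of its partial sums of rewards, which
is the genuine sum whenever the episode terminates).
-/

open Filter

open scoped Classical

noncomputable section

/-- A task: a Markov decision process `(S, A, P, R)` with deterministic
transition dynamics. -/
structure DetMDP (S A : Type) where
  /-- the deterministic transition dynamics: `δ s a` is the next state -/
  δ : S → A → S
  /-- absorbing states; a transition into an absorbing state is terminal -/
  absorbing : S → Prop
  /-- the reward `R s a = R(s, a, δ s a)` -/
  R : S → A → ℝ

namespace DetMDP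

variable {S A : Type}

/-- The agent's internal goal space `G ⊆ S`: all states where the agent
experiences a terminal transition. -/
def goalSpace (M : DetMDP S A) : Set S :=
  {s | ∃ a, M.absorbing (M.δ s a)}

/-- The extended reward function
`R̄(s, g, a, s') = r̄_MIN` if `g ≠ s` and `s'` is absorbing, `R(s, a, s')`
otherwise (here `s' = δ s a` is determined by the deterministic dynamics). -/
def extR (M : DetMDP S A) (rmin : ℝ) (s g : S) (a : A) : ℝ :=
  if g ≠ s ∧ M.absorbing (M.δ s a) then rmin else M.R s a

/-- One step of execution of a (deterministic, stationary) policy `π`;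
absorbing states are frozen. -/
def stepTo (M : DetMDP S A) (π : S → A) (s : S) : S :=
  if M.absorbing s then s else M.δ s (π s)

/-- The (deterministic) state trajectory obtained by following `π` from `s`. -/
def traj (M : DetMDP S A) (π : S → A) (s : S) : ℕ → S
  | 0 => s
  | n + 1 => M.stepTo π (M.traj π s n)

/-- The reward (w.r.t. the reward function `r`) collected at time `t`
when following `π` from `s`; it is `0` once the episode has terminated. -/
def rew (M : DetMDP S A) (r : S → A → ℝ) (π : S → A) (s : S) (t : ℕ) : ℝ :=
  if M.absorbing (M.traj π s t) then 0
  else r (M.traj π s t) (π (M.traj π s t))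

/-- The undiscounted return `∑_{t=0}^∞ r_t` collected by `π` from `s`
(as an extended real number). -/
def ret (M : DetMDP S A) (r : S → A → ℝ) (π : S → A) (s : S) : EReal :=
  liminf (fun n => ((∑ t ∈ Finset.range n, M.rew r π s t : ℝ) : EReal)) atTop

/-- The value function `V^π` of a policy for the task. -/
def Vpol (M : DetMDP S A) (π : S → A) (s : S) : EReal :=
  M.ret M.R π s

/-- The action-value function `Q^π` of a policy for the task. -/
def Qpol (M : DetMDP S A) (π : S → A) (s : S) (a : A) : EReal :=
  if M.absorbing s then 0 else (M.R s a : EReal) + M.ret M.R π (M.δ s a)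

/-- The optimal value function `V*` of the task. -/
def Vstar (M : DetMDP S A) (s : S) : EReal :=
  ⨆ π : S → A, M.Vpol π s

/-- The optimal action-value function `Q*(s, a) = max_π Q^π(s, a)` of the task. -/
def Qstar (M : DetMDP S A) (s : S) (a : A) : EReal :=
  ⨆ π : S → A, M.Qpol π s a

/-- The return of the world policy `pibar : S × G → A` for goal `g` from `s`:
the undiscounted sum of extended rewards `R̄(·, g, ·)`. -/
def wRet (M : DetMDP S A) (rmin : ℝ) (pibar : S → S → A) (g s : S) : EReal :=
  M.ret (fun x b => M.extR rmin x g b) (fun x => pibar x g) s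

/-- The world action-value function `Q̄^pibar(s, g, a)` of a world policy. -/
def wQpol (M : DetMDP S A) (rmin : ℝ) (pibar : S → S → A) (s g : S) (a : A) : EReal :=
  if M.absorbing s then 0
  else (M.extR rmin s g a : EReal) + M.wRet rmin pibar g (M.δ s a)

/-- The optimal world action-value function (the WVF)
`Q̄*(s, g, a) = max_pibar Q̄^pibar(s, g, a)`. -/
def wQstar (M : DetMDP S A) (rmin : ℝ) (s g : S) (a : A) : EReal :=
  ⨆ pibar : S → S → A, M.wQpol rmin pibar s g a

/-- The optimal world value function `V̄*(s, g) = max_a Q̄*(s, g, a)`. -/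
def wVstar (M : DetMDP S A) (rmin : ℝ) (s g : S) : EReal :=
  ⨆ a : A, M.wQstar rmin s g a

/-- Following `π` from `s`, the episode terminates with terminal state `g`,
i.e. the terminal transition is experienced at `g` (`s_T = g`). -/
def reaches (M : DetMDP S A) (π : S → A) (s g : S) : Prop :=
  ∃ n, M.traj π s n = g ∧ M.absorbing (M.traj π s (n + 1))

/-- The probability `P^pibar_s(s_T = g)` of reaching goal `g` from `s` under a
world policy `pibar` (it is `0` or `1`, since everything is deterministic). -/
def reachProb (M : DetMDP S A) (pibar : S → S → A) (s g : S) : ℝ :=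
  if M.reaches (fun x => pibar x g) s g then 1 else 0

/-- `g` is reachable from `s`. -/
def reachable (M : DetMDP S A) (s g : S) : Prop :=
  ∃ π : S → A, M.reaches π s g

/-- The penalty `rmin` (`r̄_MIN`) is strictly smaller than the least possible
return of the task. -/
def PenaltyOK (M : DetMDP S A) (rmin : ℝ) : Prop :=
  ∀ (π : S → A) (s : S), (rmin : EReal) < M.ret M.R π s

/-- `τ` is a task-specific reward function over the background MDP `M₀`:
it is non-zero only for transitions entering terminal (absorbing) states. -/
def IsTaskReward (M₀ : DetMDP S A) (τ : S → A → ℝ) : Prop :=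
  ∀ s a, ¬ M₀.absorbing (M₀.δ s a) → τ s a = 0

/-- The task over the background MDP (world) `M₀` specified by a task-specific
reward `τ`: the same state space, action space and dynamics as `M₀`, with
reward function `R_M = R₀ + R_M^τ`. -/
def withTask (M₀ : DetMDP S A) (τ : S → A → ℝ) : DetMDP S A :=
  { δ := M₀.δ, absorbing := M₀.absorbing, R := fun s a => M₀.R s a + τ s a }

/-- `τ` is a task of the world `M₀` whose terminal rewards lie in `[Rlo, Rhi]`. -/
def InWorld (M₀ : DetMDP S A) (Rlo Rhi : ℝ) (τ : S → A → ℝ) : Prop :=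
  M₀.IsTaskReward τ ∧ ∀ s a, M₀.absorbing (M₀.δ s a) → Rlo ≤ τ s a ∧ τ s a ≤ Rhi

/-! ### Auxiliary lemmas -/

lemma traj_succ' (M : DetMDP S A) (π : S → A) (s : S) (n : ℕ) :
    M.traj π s (n + 1) = M.stepTo π (M.traj π s n) := rfl

lemma absorbing_traj_succ (M : DetMDP S A) {π : S → A} {s : S} {n : ℕ}
    (h : M.absorbing (M.traj π s n)) : M.absorbing (M.traj π s (n + 1)) := by
  rw [traj_succ', stepTo, if_pos h]; exact h

lemma absorbing_traj_of_le (M : DetMDP S A) {π : S → A} {s : S} {n : ℕ}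
    (h : M.absorbing (M.traj π s n)) : ∀ m, n ≤ m → M.absorbing (M.traj π s m) := by
  intro m hm
  induction m, hm using Nat.le_induction with
  | base => exact h
  | succ m _ ih => exact M.absorbing_traj_succ ih

lemma traj_succ_of_not_absorbing (M : DetMDP S A) {π : S → A} {s : S} {n : ℕ}
    (h : ¬ M.absorbing (M.traj π s n)) :
    M.traj π s (n + 1) = M.δ (M.traj π s n) (π (M.traj π s n)) := by
  rw [traj_succ', stepTo, if_neg h]

lemma ret_congr (M : DetMDP S A) {r r' : S → A → ℝ} {π : S → A} {s : S}
    (h : ∀ t, M.rew r π s t = M.rew r' π s t) : M.ret r π s = M.ret r' π s := by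
  unfold ret
  congr 1
  funext n
  exact congrArg (fun x : ℝ => (x : EReal))
    (Finset.sum_congr rfl fun t _ => h t)

lemma ret_mono (M : DetMDP S A) {r r' : S → A → ℝ} {π : S → A} {s : S}
    (h : ∀ t, M.rew r π s t ≤ M.rew r' π s t) : M.ret r π s ≤ M.ret r' π s := by
  refine Filter.liminf_le_liminf (Filter.Eventually.of_forall fun n => ?_)
  exact_mod_cast Finset.sum_le_sum fun t _ => h t

lemma ret_absorbing (M : DetMDP S A) (r : S → A → ℝ) (π : S → A) {s : S}
    (h : M.absorbing s) : M.ret r π s = 0 := by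
  have h0 : ∀ t, M.rew r π s t = 0 := by
    intro t
    have : M.absorbing (M.traj π s t) :=
      M.absorbing_traj_of_le (n := 0) h t (Nat.zero_le _)
    simp [rew, this]
  have : (fun n => ((∑ t ∈ Finset.range n, M.rew r π s t : ℝ) : EReal))
      = fun _ => (0 : EReal) := by
    funext n; simp [h0]
  rw [ret, this, liminf_const]

/-- If a transition into an absorbing state is available at a non-absorbing
state, the penalty is strictly smaller than the corresponding reward. -/
lemma rmin_lt_R (M : DetMDP S A) {rmin : ℝ} (hpen : M.PenaltyOK rmin)
    {x : S} {b : A} (hx : ¬ M.absorbing x) (hb : M.absorbing (M.δ x b)) :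
    (rmin : EReal) < (M.R x b : EReal) := by
  have h := hpen (fun _ => b) x
  have habs : ∀ t, 1 ≤ t → M.absorbing (M.traj (fun _ => b) x t) := by
    intro t ht
    refine M.absorbing_traj_of_le (n := 1) ?_ t ht
    rw [M.traj_succ_of_not_absorbing (n := 0) hx]
    exact hb
  have hrew0 : M.rew M.R (fun _ => b) x 0 = M.R x b := by
    simp [rew, traj, hx]
  have hsum : ∀ n, 1 ≤ n →
      (∑ t ∈ Finset.range n, M.rew M.R (fun _ => b) x t) = M.R x b := by
    intro n hn
    rw [Finset.sum_eq_single 0]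
    · exact hrew0
    · intro t _ ht
      have : M.absorbing (M.traj (fun _ => b) x t) :=
        habs t (Nat.one_le_iff_ne_zero.2 ht)
      simp [rew, this]
    · intro h0
      exact absurd (Finset.mem_range.2 hn) h0
  have hret : M.ret M.R (fun _ => b) x = (M.R x b : EReal) := by
    rw [ret]
    have hcg : (fun n => ((∑ t ∈ Finset.range n, M.rew M.R (fun _ => b) x t : ℝ) : EReal))
        =ᶠ[atTop] fun _ => (M.R x b : EReal) := by
      filter_upwards [eventually_ge_atTop 1] with n hn
      rw [hsum n hn]
    rw [liminf_congr hcg, liminf_const]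
  rw [hret] at h
  exact h

/-- **Theorem 1(ii)**: for a task `M = (S, A, P, R)` with optimal `Q`-value
function `Q*` and optimal world `Q`-value function `Q̄*`, the optimal task
`Q`-value is recovered by maximising the world value function over goals:
for all `s ∈ S` and `a ∈ A`, `Q*(s, a) = max_{g ∈ G} Q̄*(s, g, a)`. -/
theorem Qstar_eq_max_wQstar_over_goals [Fintype S] [Fintype A] [Nonempty A]
    (M : DetMDP S A) (Rlo Rhi rmin : ℝ)
    (hbdd : ∀ (s : S) (a : A), Rlo ≤ M.R s a ∧ M.R s a ≤ Rhi)
    (hpen : M.PenaltyOK rmin)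
    (hG : M.goalSpace.Nonempty)
    (s : S) (a : A) :
    M.Qstar s a = ⨆ g ∈ M.goalSpace, M.wQstar rmin s g a := by
  by_cases hs : M.absorbing s
  · -- both sides are `0`
    have hL : M.Qstar s a = 0 := by
      rw [Qstar]
      simp [Qpol, hs]
    have hR : (⨆ g ∈ M.goalSpace, M.wQstar rmin s g a) = 0 := by
      obtain ⟨g0, hg0⟩ := hG
      apply le_antisymm
      · refine iSup₂_le fun g _ => ?_
        refine iSup_le fun pibar => ?_
        rw [wQpol, if_pos hs]
      · refine le_iSup₂_of_le g0 hg0 ?_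
        refine le_iSup_of_le (fun _ _ => Classical.arbitrary A) ?_
        rw [wQpol, if_pos hs]
    rw [hL, hR]
  · apply le_antisymm
    · -- `Q* ≤ ⨆ g ∈ G, Q̄*`
      refine iSup_le fun π => ?_
      rw [Qpol, if_neg hs]
      by_cases habs : M.absorbing (M.δ s a)
      · -- the first transition is terminal: take `g = s`
        have hg : s ∈ M.goalSpace := ⟨a, habs⟩
        refine le_trans ?_
          (le_iSup₂_of_le s hg (le_iSup_of_le (fun y _ => π y) le_rfl))
        rw [wQpol, if_neg hs]
        have hext : M.extR rmin s s a = M.R s a := by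
          rw [extR, if_neg]; simp
        rw [hext, wRet, M.ret_absorbing _ _ habs, M.ret_absorbing _ _ habs]
      · by_cases hhit : ∃ n, M.absorbing (M.traj π (M.δ s a) n)
        · -- the episode terminates: take `g` to be the terminal state
          set x := M.δ s a with hxdef
          have hN0 : Nat.find hhit ≠ 0 := by
            intro h0
            have := Nat.find_spec hhit
            rw [h0] at this
            exact habs this
          obtain ⟨T, hT⟩ := Nat.exists_eq_succ_of_ne_zero hN0
          have hTnot : ¬ M.absorbing (M.traj π x T) :=
            Nat.find_min hhit (by omega)
          have habsN : M.absorbing (M.traj π x (T + 1)) := by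
            have := Nat.find_spec hhit
            rwa [hT] at this
          set g : S := M.traj π x T with hgdef
          have hg : g ∈ M.goalSpace := by
            refine ⟨π g, ?_⟩
            rw [← M.traj_succ_of_not_absorbing hTnot]
            exact habsN
          refine le_trans ?_
            (le_iSup₂_of_le g hg (le_iSup_of_le (fun y _ => π y) le_rfl))
          rw [wQpol, if_neg hs]
          have hext : M.extR rmin s g a = M.R s a := by
            rw [extR, if_neg]; intro hc; exact habs hc.2
          rw [hext, wRet]
          refine le_of_eq ?_
          refine congrArg (fun z => (M.R s a : EReal) + z) ?_
          refine M.ret_congr fun t => ?_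
          rw [rew, rew]
          by_cases ht : M.absorbing (M.traj π x t)
          · rw [if_pos ht, if_pos ht]
          · have htle : t ≤ T := by
              by_contra hgt
              exact ht (M.absorbing_traj_of_le habsN t (by omega))
            rw [if_neg ht, if_neg ht, extR, if_neg]
            rintro ⟨hne, habs'⟩
            rcases lt_or_eq_of_le htle with hlt | heq
            · have : ¬ M.absorbing (M.traj π x (t + 1)) :=
                Nat.find_min hhit (by omega)
              rw [M.traj_succ_of_not_absorbing ht] at this
              exact this habs'
            · exact hne (heq ▸ rfl)
        · -- the episode never terminates: any goal works
          obtain ⟨g0, hg0⟩ := hG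
          refine le_trans ?_
            (le_iSup₂_of_le g0 hg0 (le_iSup_of_le (fun y _ => π y) le_rfl))
          rw [wQpol, if_neg hs]
          have hext : M.extR rmin s g0 a = M.R s a := by
            rw [extR, if_neg]; intro hc; exact habs hc.2
          rw [hext, wRet]
          push_neg at hhit
          refine le_of_eq ?_
          refine congrArg (fun z => (M.R s a : EReal) + z) ?_
          refine M.ret_congr fun t => ?_
          rw [rew, rew]
          rw [if_neg (hhit t), if_neg (hhit t), extR, if_neg]
          rintro ⟨-, habs'⟩
          refine hhit (t + 1) ?_
          rw [M.traj_succ_of_not_absorbing (hhit t)]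
          exact habs'
    · -- `⨆ g ∈ G, Q̄* ≤ Q*`
      refine iSup₂_le fun g _ => ?_
      refine iSup_le fun pibar => ?_
      set π : S → A := fun y => pibar y g with hπ
      rw [wQpol, if_neg hs]
      by_cases hA : g ≠ s ∧ M.absorbing (M.δ s a)
      · -- penalised first step
        rw [extR, if_pos hA, wRet, M.ret_absorbing _ _ hA.2, add_zero]
        have h1 : (rmin : EReal) < (M.R s a : EReal) := M.rmin_lt_R hpen hs hA.2
        refine le_trans (le_of_lt h1) ?_
        refine le_iSup_of_le (fun _ => a) ?_
        rw [Qpol, if_neg hs, M.ret_absorbing _ _ hA.2, add_zero]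
      · rw [extR, if_neg hA, wRet]
        refine le_trans ?_ (le_iSup_of_le π le_rfl)
        rw [Qpol, if_neg hs]
        refine add_le_add_right (M.ret_mono fun t => ?_) _
        rw [rew, rew]
        by_cases ht : M.absorbing (M.traj π (M.δ s a) t)
        · rw [if_pos ht, if_pos ht]
        · rw [if_neg ht, if_neg ht]
          by_cases hp : g ≠ M.traj π (M.δ s a) t ∧
              M.absorbing (M.δ (M.traj π (M.δ s a) t) (π (M.traj π (M.δ s a) t)))
          · rw [extR, if_pos hp]
            have := M.rmin_lt_R hpen ht hp.2
            exact_mod_cast le_of_lt this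
          · rw [extR, if_neg hp]

end DetMDP
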